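/- There is no real number X satisfying simultaneously 1 − 10X = 0 and 336X² − 84X + 5 = 0. Consequently, since the phase error of a fourth-order three-stage minimal-dissipation scheme expands as φ(σ) = ((1 − 10X)/120)σ⁵ − ((336X² − 84X + 5)/4032)σ⁷ + O(σ⁹), no choice of X makes both the σ⁵ and σ⁷ coefficients vanish, so the dispersive order of such a scheme never exceeds six. -/

import Mathlib

open Asymptotics Filter Real

lemma arctan_P7_nonneg : ∀ t : ℝ, 0 ≤ t →
    0 ≤ Real.arctan t - (t - t^3/3 + t^5/5 - t^7/7) ∧
    Real.arctan t - (t - t^3/3 + t^5/5 - t^7/7) ≤ t^9/9 := by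
  have hpoly : ∀ x : ℝ, HasDerivAt (fun t : ℝ => t - t^3/3 + t^5/5 - t^7/7)
      (1 - x^2 + x^4 - x^6) x := by
    intro x
    have := (((hasDerivAt_id x).sub ((hasDerivAt_pow 3 x).div_const 3)).add
      ((hasDerivAt_pow 5 x).div_const 5)).sub ((hasDerivAt_pow 7 x).div_const 7)
    refine this.congr_deriv ?_
    push_cast; ring
  have hd1 : ∀ x : ℝ, HasDerivAt
      (fun t : ℝ => Real.arctan t - (t - t^3/3 + t^5/5 - t^7/7)) (x^8/(1+x^2)) x := by
    intro x
    have := (Real.hasDerivAt_arctan x).sub (hpoly x)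
    refine this.congr_deriv ?_
    have h2 : (0:ℝ) < 1 + x^2 := by positivity
    field_simp
    ring
  have hd2 : ∀ x : ℝ, HasDerivAt
      (fun t : ℝ => t^9/9 - (Real.arctan t - (t - t^3/3 + t^5/5 - t^7/7)))
      (x^10/(1+x^2)) x := by
    intro x
    have := ((hasDerivAt_pow 9 x).div_const 9).sub (hd1 x)
    refine this.congr_deriv ?_
    have h2 : (0:ℝ) < 1 + x^2 := by positivity
    field_simp
    ring
  have m1 : Monotone (fun t : ℝ => Real.arctan t - (t - t^3/3 + t^5/5 - t^7/7)) :=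
    monotone_of_deriv_nonneg (fun x => (hd1 x).differentiableAt)
      (fun x => by rw [(hd1 x).deriv]; positivity)
  have m2 : Monotone (fun t : ℝ => t^9/9 - (Real.arctan t - (t - t^3/3 + t^5/5 - t^7/7))) :=
    monotone_of_deriv_nonneg (fun x => (hd2 x).differentiableAt)
      (fun x => by rw [(hd2 x).deriv]; positivity)
  intro t ht
  have h1 := m1 ht
  have h2 := m2 ht
  simp [Real.arctan_zero] at h1 h2
  constructor <;> linarith

lemma arctan_P7_abs (t : ℝ) :
    |Real.arctan t - (t - t^3/3 + t^5/5 - t^7/7)| ≤ |t|^9/9 := by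
  rcases le_or_gt 0 t with ht | ht
  · obtain ⟨h1, h2⟩ := arctan_P7_nonneg t ht
    rw [abs_of_nonneg h1, abs_of_nonneg ht]
    exact h2
  · obtain ⟨h1, h2⟩ := arctan_P7_nonneg (-t) (by linarith)
    rw [Real.arctan_neg] at h1 h2
    rw [abs_of_neg ht]
    have heq : |Real.arctan t - (t - t^3/3 + t^5/5 - t^7/7)|
        = -Real.arctan t - ((-t) - (-t)^3/3 + (-t)^5/5 - (-t)^7/7) := by
      rw [abs_of_nonpos (by nlinarith [h1])]
      ring
    rw [heq]
    nlinarith [h2]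

lemma val_zero {g : ℝ → ℝ} {C : ℝ} {n : ℕ} (hg : Continuous g) (hn : 0 < n)
    (hb : ∀ᶠ σ in nhdsWithin (0:ℝ) (Set.Ioi 0), |g σ| ≤ C * σ ^ n) : g 0 = 0 := by
  have h1 : Tendsto g (nhdsWithin (0:ℝ) (Set.Ioi 0)) (nhds (g 0)) :=
    (hg.tendsto 0).mono_left nhdsWithin_le_nhds
  have h2 : Tendsto (fun σ : ℝ => C * σ ^ n) (nhdsWithin (0:ℝ) (Set.Ioi 0)) (nhds 0) := by
    have h3 : Tendsto (fun σ : ℝ => C * σ ^ n) (nhds 0) (nhds (C * 0 ^ n)) :=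
      (continuous_const.mul (continuous_pow n)).tendsto 0
    simpa [zero_pow hn.ne'] using h3.mono_left nhdsWithin_le_nhds
  have h4 : Tendsto g (nhdsWithin (0:ℝ) (Set.Ioi 0)) (nhds 0) :=
    squeeze_zero_norm' (by simpa [Real.norm_eq_abs] using hb) h2
  exact tendsto_nhds_unique h1 h4

/-- The quotient polynomial `N` with `r(σ)·105·v(σ)⁷ = σ⁵·N(X, σ)`. -/
noncomputable def Nq (X σ : ℝ) : ℝ :=
  (1120*X - 112) + (-6720*X^2 + 504*X + 50/3)*σ^2
  + (16800*X^3 - 672*X^2 - 280/3*X - 175/27)*σ^4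
  + (-22400*X^4 - 280*X^3 + 560/3*X^2 + 1330/27*X - 245/72)*σ^6
  + (16800*X^5 + 1680*X^4 - 350/3*X^3 - 2695/18*X^2 + 1295/72*X - 245/432)*σ^8
  + (-6720*X^6 - 1848*X^5 - 350/3*X^4 + 6370/27*X^3 - 455/12*X^2 + 665/288*X - 259/5184)*σ^10
  + (1120*X^7 + 896*X^6 + 700/3*X^5 - 5530/27*X^4 + 1435/36*X^3 - 1015/288*X^2 + 1561/10368*X - 35/13824)*σ^12
  + (-168*X^7 - 140*X^6 + 280/3*X^5 - 1505/72*X^4 + 2065/864*X^3 - 49/324*X^2 + 35/6912*X - 35/497664)*σ^14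
  + (30*X^7 - 35/2*X^6 + 35/8*X^5 - 175/288*X^4 + 175/3456*X^3 - 35/13824*X^2 + 35/497664*X - 5/5971968)*σ^16

/-- The further quotient at `X = 1/10`: `σ⁵·N(1/10, σ) = σ⁷·N₂(σ)`. -/
noncomputable def Nq2 (σ : ℝ) : ℝ :=
  -2/15 + (-3871/675)*σ^2 + (4697/5400)*σ^4 + (-1253/27000)*σ^6
  + (1351/1620000)*σ^8 + (1309/648000000)*σ^10 + (-259/38880000000)*σ^12
  + (1/93312000000)*σ^14

lemma Nq_cont (X : ℝ) : Continuous (fun σ => Nq X σ) := by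
  unfold Nq; fun_prop

lemma Nq2_cont : Continuous Nq2 := by
  unfold Nq2; fun_prop

set_option maxHeartbeats 2000000 in
lemma Nq_quot (σ : ℝ) : σ^5 * Nq (1/10) σ = σ^7 * Nq2 σ := by
  unfold Nq Nq2; ring

set_option maxHeartbeats 2000000 in
/-- No real `X` annihilates both the `σ⁵` and the `σ⁷`
coefficients of the three-stage phase error expansion; consequently, for no `X`
is the phase error `σ − 2·arctan(2(σ²X − 1)/(σ − σ³(X − 1/12))) − π` of order
`O(σ⁸)` as `σ → 0⁺`, i.e. the dispersive order of a fourth-order three-stage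
minimal-dissipation scheme never exceeds six. -/
theorem three_stage_dispersive_order_at_most_six :
    (¬ ∃ X : ℝ, 1 - 10 * X = 0 ∧ 336 * X ^ 2 - 84 * X + 5 = 0)
    ∧ ∀ X : ℝ,
      ¬ ((fun σ : ℝ =>
            σ - 2 * Real.arctan (2 * (σ ^ 2 * X - 1) / (σ - σ ^ 3 * (X - 1 / 12)))
              - Real.pi)
        =O[nhdsWithin 0 (Set.Ioi 0)] (fun σ : ℝ => σ ^ 8)) := by
  constructor
  · rintro ⟨X, h1, h2⟩
    have hX : X = 1/10 := by linarith
    rw [hX] at h2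
    norm_num at h2
  · intro X hO
    rw [isBigO_iff] at hO
    obtain ⟨c, hc⟩ := hO
    have hδ : (0:ℝ) < min 1 (1/(2*(|X| + |X - 1/12|)+2)) := by positivity
    have hIoo : ∀ᶠ σ in nhdsWithin (0:ℝ) (Set.Ioi 0),
        σ ∈ Set.Ioo 0 (min 1 (1/(2*(|X| + |X - 1/12|)+2))) :=
      Ioo_mem_nhdsGT_of_mem ⟨le_refl 0, hδ⟩
    -- eventual bound on the rational approximation r(σ), together with the
    -- polynomial identity for r(σ)·105·v(σ)⁷ and bounds on v
    have hr : ∀ᶠ σ in nhdsWithin (0:ℝ) (Set.Ioi 0),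
        0 < σ ∧ |(2*(σ^2*X-1))^7| ≤ 2187 ∧
        (σ + 2*((σ - σ^3*(X-1/12))/(2*(σ^2*X-1))
            - ((σ - σ^3*(X-1/12))/(2*(σ^2*X-1)))^3/3
            + ((σ - σ^3*(X-1/12))/(2*(σ^2*X-1)))^5/5
            - ((σ - σ^3*(X-1/12))/(2*(σ^2*X-1)))^7/7))
          * (105 * (2*(σ^2*X-1))^7) = σ^5 * Nq X σ ∧
        |σ + 2*((σ - σ^3*(X-1/12))/(2*(σ^2*X-1))
            - ((σ - σ^3*(X-1/12))/(2*(σ^2*X-1)))^3/3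
            + ((σ - σ^3*(X-1/12))/(2*(σ^2*X-1)))^5/5
            - ((σ - σ^3*(X-1/12))/(2*(σ^2*X-1)))^7/7)| ≤ (|c|+114) * σ^8 := by
      filter_upwards [hIoo, hc] with σ hσ hfσ
      obtain ⟨hσ0, hσδ⟩ := hσ
      have hσ1 : σ ≤ 1 := le_trans hσδ.le (min_le_left _ _)
      have hσ2 : σ ≤ 1/(2*(|X| + |X - 1/12|)+2) := le_trans hσδ.le (min_le_right _ _)
      have hD : (0:ℝ) < 2*(|X| + |X - 1/12|)+2 := by positivity
      have hσ2' : σ * (2*(|X| + |X - 1/12|)+2) ≤ 1 := by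
        rw [le_div_iff₀ hD] at hσ2; exact hσ2
      have hXabs : σ^2 * |X| ≤ 1/2 := by nlinarith [abs_nonneg X, abs_nonneg (X - 1/12)]
      have haabs : σ^2 * |X - 1/12| ≤ 1/2 := by
        nlinarith [abs_nonneg X, abs_nonneg (X - 1/12)]
      have hXle : σ^2 * X ≤ 1/2 := le_trans (by nlinarith [le_abs_self X, sq_nonneg σ]) hXabs
      have hXge : -(1/2) ≤ σ^2 * X := by nlinarith [neg_abs_le X, sq_nonneg σ]
      have hv1 : 2*(σ^2*X-1) ≤ -1 := by linarith
      have hv2 : -3 ≤ 2*(σ^2*X-1) := by linarith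
      have hvne : 2*(σ^2*X-1) ≠ 0 := by linarith
      have hup : σ * (σ^2 * (X - 1/12)) ≤ σ * (σ^2 * |X - 1/12|) :=
        mul_le_mul_of_nonneg_left
          (mul_le_mul_of_nonneg_left (le_abs_self _) (sq_nonneg σ)) hσ0.le
      have hlo : σ * (σ^2 * (-(|X - 1/12|))) ≤ σ * (σ^2 * (X - 1/12)) :=
        mul_le_mul_of_nonneg_left
          (mul_le_mul_of_nonneg_left (neg_abs_le _) (sq_nonneg σ)) hσ0.le
      have hcap : σ * (σ^2 * |X - 1/12|) ≤ σ * (1/2) :=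
        mul_le_mul_of_nonneg_left haabs hσ0.le
      have ha1 : σ^3 * (X - 1/12) ≤ σ/2 := by nlinarith [hup, hcap]
      have ha2 : -(σ/2) ≤ σ^3 * (X - 1/12) := by nlinarith [hlo, hcap]
      have hwpos : 0 < σ - σ^3*(X-1/12) := by linarith
      have hvb : |2*(σ^2*X-1)| ≤ 3 := abs_le.mpr ⟨by linarith, by linarith⟩
      have hv7 : |(2*(σ^2*X-1))^7| ≤ 2187 := by
        rw [abs_pow]
        calc |2*(σ^2*X-1)|^7 ≤ 3^7 := pow_le_pow_left₀ (abs_nonneg _) hvb 7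
        _ = 2187 := by norm_num
      have hid2 : (σ + 2*((σ - σ^3*(X-1/12))/(2*(σ^2*X-1))
            - ((σ - σ^3*(X-1/12))/(2*(σ^2*X-1)))^3/3
            + ((σ - σ^3*(X-1/12))/(2*(σ^2*X-1)))^5/5
            - ((σ - σ^3*(X-1/12))/(2*(σ^2*X-1)))^7/7))
          * (105 * (2*(σ^2*X-1))^7) = σ^5 * Nq X σ := by
        unfold Nq
        have hvne' : σ^2*X-1 ≠ 0 := fun h => hvne (by rw [h]; ring)
        field_simp
        ring
      set w : ℝ := σ - σ^3*(X-1/12) with hw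
      set v : ℝ := 2*(σ^2*X-1) with hv
      have hhneg : w / v < 0 := div_neg_of_pos_of_neg hwpos (by linarith)
      have hhabs : |w / v| ≤ 2*σ := by
        rw [abs_div, abs_of_pos hwpos]
        have hv3 : 1 ≤ |v| := by
          rw [abs_of_nonpos (by linarith)]; linarith
        have hd : w / |v| ≤ w := div_le_self hwpos.le hv3
        have hw32 : w ≤ 3*σ/2 := by rw [hw]; linarith
        linarith
      -- identity: phase error = σ + 2 arctan (w/v)
      have hid : σ - 2 * Real.arctan (2 * (σ ^ 2 * X - 1) / (σ - σ ^ 3 * (X - 1 / 12)))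
            - π = σ + 2 * Real.arctan (w / v) := by
        have h1 : 2 * (σ ^ 2 * X - 1) / (σ - σ ^ 3 * (X - 1 / 12)) = (w / v)⁻¹ := by
          rw [inv_div]
        rw [h1, Real.arctan_inv_of_neg hhneg]
        ring
      have hb := arctan_P7_abs (w / v)
      have h9 : |w/v|^9 ≤ (2*σ)^9 := pow_le_pow_left₀ (abs_nonneg _) hhabs 9
      have hσ98 : σ^9 ≤ σ^8 := by
        calc σ^9 = σ^8 * σ := by ring
        _ ≤ σ^8 * 1 := by nlinarith [pow_pos hσ0 8]
        _ = σ^8 := by ring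
      simp only [Real.norm_eq_abs] at hfσ
      have h8 : |σ^8| = σ^8 := abs_of_nonneg (by positivity)
      rw [h8] at hfσ
      refine ⟨hσ0, hv7, hid2, ?_⟩
      have htri : |σ + 2*(w/v - (w/v)^3/3 + (w/v)^5/5 - (w/v)^7/7)|
          ≤ |σ + 2 * Real.arctan (w/v)|
            + 2 * |Real.arctan (w/v) - (w/v - (w/v)^3/3 + (w/v)^5/5 - (w/v)^7/7)| := by
        have heq2 : σ + 2*(w/v - (w/v)^3/3 + (w/v)^5/5 - (w/v)^7/7)
            = (σ + 2 * Real.arctan (w/v))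
              - 2 * (Real.arctan (w/v) - (w/v - (w/v)^3/3 + (w/v)^5/5 - (w/v)^7/7)) := by
          ring
        rw [heq2]
        calc |_ - _| ≤ |σ + 2 * Real.arctan (w/v)|
            + |2 * (Real.arctan (w/v) - (w/v - (w/v)^3/3 + (w/v)^5/5 - (w/v)^7/7))| :=
          abs_sub _ _
        _ = _ := by rw [abs_mul]; norm_num
      have hf2 : |σ + 2 * Real.arctan (w/v)| ≤ |c| * σ^8 := by
        rw [← hid]
        calc |σ - 2 * Real.arctan (2 * (σ ^ 2 * X - 1) / (σ - σ ^ 3 * (X - 1 / 12))) - π|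
            ≤ c * σ^8 := hfσ
        _ ≤ |c| * σ^8 := by nlinarith [le_abs_self c, pow_pos hσ0 8]
      have h29 : (2*σ)^9 = 512 * σ^9 := by ring
      nlinarith [abs_nonneg (Real.arctan (w/v) - (w/v - (w/v)^3/3 + (w/v)^5/5 - (w/v)^7/7)),
        pow_pos hσ0 8]
    by_cases hX10 : X = 1/10
    · -- σ⁷-coefficient case
      subst hX10
      have hNb : ∀ᶠ σ in nhdsWithin (0:ℝ) (Set.Ioi 0),
          |Nq2 σ| ≤ ((|c|+114)*105*2187) * σ^1 := by
        filter_upwards [hr] with σ ⟨hσ0, hv7, hid2, hrb⟩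
        rw [Nq_quot] at hid2
        have e1 := congrArg abs hid2.symm
        rw [abs_mul, abs_mul, abs_mul, abs_of_nonneg (show (0:ℝ) ≤ σ^7 by positivity),
          abs_of_nonneg (show (0:ℝ) ≤ 105 by norm_num)] at e1
        have hr0 : (0:ℝ) ≤ (|c|+114) * σ^8 := le_trans (abs_nonneg _) hrb
        have hmm := mul_le_mul hrb hv7 (abs_nonneg _) hr0
        have key : σ^7 * |Nq2 σ| ≤ (|c|+114) * σ^8 * 2187 * 105 := by
          rw [e1]; nlinarith [hmm, abs_nonneg ((2*(σ^2*(1/10:ℝ)-1))^7)]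
        rw [pow_one]
        have h7pos : (0:ℝ) < σ^7 := pow_pos hσ0 7
        apply le_of_mul_le_mul_left _ h7pos
        calc σ^7 * |Nq2 σ| ≤ (|c|+114) * σ^8 * 2187 * 105 := key
        _ = σ^7 * ((|c|+114)*105*2187 * σ) := by ring
      have h0 := val_zero Nq2_cont (by norm_num : 0 < 1) hNb
      unfold Nq2 at h0
      norm_num at h0
    · -- σ⁵-coefficient case, X ≠ 1/10
      have hNb : ∀ᶠ σ in nhdsWithin (0:ℝ) (Set.Ioi 0),
          |Nq X σ| ≤ ((|c|+114)*105*2187) * σ^3 := by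
        filter_upwards [hr] with σ ⟨hσ0, hv7, hid2, hrb⟩
        have e1 := congrArg abs hid2.symm
        rw [abs_mul, abs_mul, abs_mul, abs_of_nonneg (show (0:ℝ) ≤ σ^5 by positivity),
          abs_of_nonneg (show (0:ℝ) ≤ 105 by norm_num)] at e1
        have hr0 : (0:ℝ) ≤ (|c|+114) * σ^8 := le_trans (abs_nonneg _) hrb
        have hmm := mul_le_mul hrb hv7 (abs_nonneg _) hr0
        have key : σ^5 * |Nq X σ| ≤ (|c|+114) * σ^8 * 2187 * 105 := by
          rw [e1]; nlinarith [hmm, abs_nonneg ((2*(σ^2*X-1))^7)]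
        have h5pos : (0:ℝ) < σ^5 := pow_pos hσ0 5
        apply le_of_mul_le_mul_left _ h5pos
        calc σ^5 * |Nq X σ| ≤ (|c|+114) * σ^8 * 2187 * 105 := key
        _ = σ^5 * ((|c|+114)*105*2187 * σ^3) := by ring
      have h0 := val_zero (Nq_cont X) (by norm_num : 0 < 3) hNb
      unfold Nq at h0
      norm_num at h0
      exact hX10 (by linarith)
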